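/- Let ℓ ≥ 5 be an integer and let G be a graph such that every subgraph J of G with at least one vertex satisfies (ℓ−2)·e(J) < (ℓ−1)·v(J) (i.e. m(G) < (ℓ−1)/(ℓ−2)). Let (H₁,…,H_t) be a construction sequence of ℓ-cycles in G, and for 1 ≤ i ≤ t−1 set e_i = |E(H_{i+1}) \ E(H_i)| and v_i = |V(H_{i+1}) \ V(H_i)|. Then there is at most one index 1 ≤ i ≤ t−1 with e_i ≥ v_i + 2 (in particular, a configuration of type (B_j) appears at most once). -/

import Mathlib

/-- `C` is an `ℓ`-cycle of `G`, given as a subgraph of `G`. -/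
def IsCycleSubgraph {V : Type*} (G : SimpleGraph V) (ℓ : ℕ) (C : G.Subgraph) : Prop :=
  Nonempty (C.coe ≃g SimpleGraph.cycleGraph ℓ)

/-- `(H 1, …, H t)` is a construction sequence of `ℓ`-cycles in `G`: `H 1` is an
`ℓ`-cycle of `G` and each `H (i+1)` is obtained from `H i` by adding an `ℓ`-cycle `C`
of `G` with `C ⊄ H i` and `E(C) ∩ E(H i) ≠ ∅`. -/
def IsConstructionSeq {V : Type*} (G : SimpleGraph V) (ℓ t : ℕ)
    (H : ℕ → G.Subgraph) : Prop :=
  1 ≤ t ∧ IsCycleSubgraph G ℓ (H 1) ∧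
    ∀ i, 1 ≤ i → i < t → ∃ C : G.Subgraph, IsCycleSubgraph G ℓ C ∧
      ¬ C ≤ H i ∧ (C.edgeSet ∩ (H i).edgeSet).Nonempty ∧ H (i + 1) = H i ⊔ C

open SimpleGraph Set in
lemma cycle_exists_w {V : Type*} {G : SimpleGraph V} {n : ℕ} {C : G.Subgraph}
    (hC : IsCycleSubgraph G (n+2) C) :
    ∃ w : Fin (n+2) → V, Function.Injective w ∧ Set.range w = C.verts ∧
      (∀ x, C.Adj (w x) (w (x+1))) ∧
      (∀ u v, C.Adj u v → ∃ x, s(u,v) = s(w x, w (x+1))) := by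
  obtain ⟨φ⟩ := hC
  refine ⟨fun x => (φ.symm x : V), ?_, ?_, ?_, ?_⟩
  · intro a b h
    exact φ.symm.injective (Subtype.ext h)
  · ext v
    constructor
    · rintro ⟨x, rfl⟩; exact (φ.symm x).2
    · intro hv
      exact ⟨φ ⟨v, hv⟩, by simp⟩
  · intro x
    have hadj : (cycleGraph (n+2)).Adj x (x+1) := by
      rw [cycleGraph_adj]; right; exact add_sub_cancel_left x 1
    exact φ.symm.map_adj_iff.mpr hadj
  · intro u v huv
    have hu : u ∈ C.verts := C.edge_vert huv
    have hv : v ∈ C.verts := C.edge_vert huv.symm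
    have hcoe : C.coe.Adj ⟨u, hu⟩ ⟨v, hv⟩ := huv
    have hcyc : (cycleGraph (n+2)).Adj (φ ⟨u, hu⟩) (φ ⟨v, hv⟩) := φ.map_adj_iff.mpr hcoe
    rw [cycleGraph_adj] at hcyc
    rcases hcyc with h | h
    · refine ⟨φ ⟨v, hv⟩, ?_⟩
      rw [sub_eq_iff_eq_add] at h
      have h' : φ ⟨u, hu⟩ = φ ⟨v, hv⟩ + 1 := by rw [h]; exact add_comm _ _
      exact Sym2.eq_iff.mpr (Or.inr ⟨by rw [← h']; simp, by simp⟩)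
    · refine ⟨φ ⟨u, hu⟩, ?_⟩
      rw [sub_eq_iff_eq_add] at h
      have h' : φ ⟨v, hv⟩ = φ ⟨u, hu⟩ + 1 := by rw [h]; exact add_comm _ _
      exact Sym2.eq_iff.mpr (Or.inl ⟨by simp, by rw [← h']; simp⟩)

lemma fin_ne_add_one {n : ℕ} (a : Fin (n+2)) : a ≠ a + 1 := by
  intro h
  have hv := congrArg Fin.val h
  simp only [Fin.val_add, Fin.val_one] at hv
  have h1 : a.val < n + 2 := a.isLt
  rcases Nat.lt_or_ge (a.val + 1) (n+2) with hlt | hge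
  · rw [Nat.mod_eq_of_lt hlt] at hv; omega
  · have he : a.val + 1 = n + 2 := by omega
    rw [he, Nat.mod_self] at hv; omega

lemma fin_ne_add_two {n : ℕ} (hn : 3 ≤ n) (a : Fin (n+2)) : a ≠ a + 1 + 1 := by
  intro h
  have hv := congrArg Fin.val h
  simp only [Fin.val_add, Fin.val_one] at hv
  have h1 : a.val < n + 2 := a.isLt
  rcases Nat.lt_or_ge (a.val + 1) (n+2) with hlt | hge
  · rw [Nat.mod_eq_of_lt hlt] at hv
    rcases Nat.lt_or_ge (a.val + 1 + 1) (n+2) with hlt2 | hge2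
    · rw [Nat.mod_eq_of_lt hlt2] at hv; omega
    · have he : a.val + 1 + 1 = n + 2 := by omega
      rw [he, Nat.mod_self] at hv; omega
  · have he : a.val + 1 = n + 2 := by omega
    rw [he, Nat.mod_self] at hv
    rw [Nat.mod_eq_of_lt (by omega)] at hv
    omega

lemma sym2_succ_injective {n : ℕ} (hn : 3 ≤ n) {V : Type*} {w : Fin (n+2) → V}
    (hinj : Function.Injective w) :
    Function.Injective (fun x : Fin (n+2) => s(w x, w (x+1))) := by
  intro a b h
  rcases Sym2.eq_iff.mp h with ⟨h1, _⟩ | ⟨h1, h2'⟩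
  · exact hinj h1
  · have ha : a = b + 1 := hinj h1
    have hb : a + 1 = b := hinj h2'
    exfalso
    exact fin_ne_add_two hn a (by rw [← hb] at ha; exact ha)

open SimpleGraph Set in
lemma cycle_cards {V : Type*} [Fintype V] {G : SimpleGraph V} {n : ℕ} (hn : 3 ≤ n)
    {C : G.Subgraph} (hC : IsCycleSubgraph G (n+2) C) :
    C.verts.ncard = n+2 ∧ C.edgeSet.ncard = n+2 := by
  obtain ⟨w, hinj, hrange, hadj, hedge⟩ := cycle_exists_w hC
  have ginj := sym2_succ_injective hn hinj
  constructor
  · rw [← hrange, ← Set.image_univ, Set.ncard_image_of_injective _ hinj, Set.ncard_univ,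
      Nat.card_eq_fintype_card, Fintype.card_fin]
  · have hES : C.edgeSet = Set.range (fun x : Fin (n+2) => s(w x, w (x+1))) := by
      ext e
      constructor
      · intro he
        induction e using Sym2.ind with
        | _ u v =>
          obtain ⟨x, hx⟩ := hedge u v (SimpleGraph.Subgraph.mem_edgeSet.mp he)
          exact ⟨x, hx.symm⟩
      · rintro ⟨x, rfl⟩
        exact SimpleGraph.Subgraph.mem_edgeSet.mpr (hadj x)
    rw [hES, ← Set.image_univ, Set.ncard_image_of_injective _ ginj, Set.ncard_univ,
      Nat.card_eq_fintype_card, Fintype.card_fin]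

open SimpleGraph Set Fin.NatCast in
lemma step_bounds {V : Type*} [Fintype V] {G : SimpleGraph V} {n : ℕ} (hn : 3 ≤ n)
    {C Hs : G.Subgraph} (hC : IsCycleSubgraph G (n+2) C) (hns : ¬ C ≤ Hs)
    (hsh : (C.edgeSet ∩ Hs.edgeSet).Nonempty) :
    (C.verts \ Hs.verts).ncard + 2 ≤ n + 2 ∧
      (C.verts \ Hs.verts).ncard + 1 ≤ (C.edgeSet \ Hs.edgeSet).ncard := by
  obtain ⟨w, hinj, hrange, hadj, hedge⟩ := cycle_exists_w hC
  set g : Fin (n+2) → Sym2 V := fun x => s(w x, w (x+1)) with hg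
  have ginj : Function.Injective g := sym2_succ_injective hn hinj
  have hgC : ∀ x, g x ∈ C.edgeSet := fun x => SimpleGraph.Subgraph.mem_edgeSet.mpr (hadj x)
  -- a new edge exists
  have hTfull : ¬ ∀ x, g x ∈ Hs.edgeSet := by
    intro hall
    apply hns
    constructor
    · intro v hv
      rw [← hrange] at hv
      obtain ⟨x, rfl⟩ := hv
      exact Hs.edge_vert (SimpleGraph.Subgraph.mem_edgeSet.mp (hall x))
    · intro u v huv
      obtain ⟨x, hx⟩ := hedge u v huv
      exact SimpleGraph.Subgraph.mem_edgeSet.mp (by rw [hx]; exact hall x)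
  obtain ⟨x₁, hx₁⟩ : ∃ x, g x ∉ Hs.edgeSet := by push_neg at hTfull; exact hTfull
  -- an old edge exists
  obtain ⟨x₀, hx₀⟩ : ∃ x₀, g x₀ ∈ Hs.edgeSet := by
    obtain ⟨e₀, he₀C, he₀H⟩ := hsh
    induction e₀ using Sym2.ind with
    | _ u v =>
      obtain ⟨x, hx⟩ := hedge u v (SimpleGraph.Subgraph.mem_edgeSet.mp he₀C)
      exact ⟨x, by show s(w x, w (x+1)) ∈ Hs.edgeSet; rw [← hx]; exact he₀H⟩
  -- boundary: an old edge followed by a new edge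
  obtain ⟨xs, hxsT, hxs1⟩ : ∃ x, g x ∈ Hs.edgeSet ∧ g (x+1) ∉ Hs.edgeSet := by
    by_contra hno
    push_neg at hno
    apply hx₁
    have hk : ∀ k : ℕ, g (x₀ + (k : Fin (n+2))) ∈ Hs.edgeSet := by
      intro k
      induction k with
      | zero => simpa using hx₀
      | succ m ih =>
        have hc : ((m+1 : ℕ) : Fin (n+2)) = (m : Fin (n+2)) + 1 := by push_cast; ring
        rw [hc, ← add_assoc]
        exact hno _ ih
    have hfin := hk ((x₁ - x₀).val)
    rwa [Fin.cast_val_eq_self, add_comm, sub_add_cancel] at hfin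
  have hwxs : w xs ∈ Hs.verts := Hs.edge_vert (SimpleGraph.Subgraph.mem_edgeSet.mp hxsT)
  have hwxs1 : w (xs+1) ∈ Hs.verts :=
    Hs.edge_vert (SimpleGraph.Subgraph.mem_edgeSet.mp hxsT).symm
  set N : Set (Fin (n+2)) := {x | w x ∉ Hs.verts} with hN
  have himg : C.verts \ Hs.verts = w '' N := by
    ext v
    constructor
    · rintro ⟨hv, hnv⟩
      rw [← hrange] at hv
      obtain ⟨x, rfl⟩ := hv
      exact ⟨x, hnv, rfl⟩
    · rintro ⟨x, hx, rfl⟩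
      exact ⟨hrange ▸ Set.mem_range_self x, hx⟩
  have hNcard : (C.verts \ Hs.verts).ncard = N.ncard := by
    rw [himg, Set.ncard_image_of_injective _ hinj]
  constructor
  · have hsub : N ⊆ (Set.univ : Set (Fin (n+2))) \ {xs, xs+1} := by
      intro x hx
      refine ⟨trivial, ?_⟩
      rintro (rfl | rfl)
      · exact hx hwxs
      · exact hx hwxs1
    have hcard2 : ((Set.univ : Set (Fin (n+2))) \ {xs, xs+1}).ncard = n := by
      rw [Set.ncard_diff (Set.subset_univ _), Set.ncard_univ, Nat.card_eq_fintype_card,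
        Fintype.card_fin, Set.ncard_pair (fin_ne_add_one xs)]
      omega
    have hle := Set.ncard_le_ncard hsub (Set.toFinite _)
    omega
  · have hxs1N : (xs+1) ∉ N := fun h => h hwxs1
    have hsubE : g '' (insert (xs+1) N) ⊆ C.edgeSet \ Hs.edgeSet := by
      rintro e ⟨x, hx, rfl⟩
      refine ⟨hgC x, ?_⟩
      rcases hx with rfl | hx
      · exact hxs1
      · intro hmem
        exact hx (Hs.edge_vert (SimpleGraph.Subgraph.mem_edgeSet.mp hmem))
    have hcount : (g '' (insert (xs+1) N)).ncard = N.ncard + 1 := by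
      rw [Set.ncard_image_of_injective _ ginj,
        Set.ncard_insert_of_notMem hxs1N (Set.toFinite _)]
    have hle := Set.ncard_le_ncard hsubE (Set.toFinite _)
    omega

lemma if_succ_eq {a m : ℕ} (h : a ≠ m+1) :
    (if a ≤ m+1 then 1 else 0 : ℕ) = (if a ≤ m then 1 else 0) := by
  by_cases ham : a ≤ m
  · rw [if_pos (by omega), if_pos ham]
  · rw [if_neg (by omega), if_neg ham]

/-- In a construction sequence of `ℓ`-cycles in a graph `G` with `m(G) < (ℓ-1)/(ℓ-2)`,
there is at most one index `1 ≤ i ≤ t-1` with `e i ≥ v i + 2`, where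
`e i = |E(H (i+1)) \\ E(H i)|` and `v i = |V(H (i+1)) \\ V(H i)|` (in particular, a
configuration of type `(B_j)` appears at most once). -/
theorem configuration_B_at_most_once {V : Type*} [Fintype V]
    (ℓ : ℕ) (hℓ : 5 ≤ ℓ) (G : SimpleGraph V)
    (hG : ∀ J : G.Subgraph, J.verts.Nonempty →
      (ℓ - 2) * J.edgeSet.ncard < (ℓ - 1) * J.verts.ncard)
    (t : ℕ) (H : ℕ → G.Subgraph) (hH : IsConstructionSeq G ℓ t H) :
    {i : ℕ | 1 ≤ i ∧ i < t ∧
      ((H (i + 1)).verts \ (H i).verts).ncard + 2 ≤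
        ((H (i + 1)).edgeSet \ (H i).edgeSet).ncard}.Subsingleton := by
  obtain ⟨n, rfl⟩ : ∃ n, ℓ = n + 2 := ⟨ℓ - 2, by omega⟩
  have hn : 3 ≤ n := by omega
  obtain ⟨ht1, hcyc1, hstep⟩ := hH
  intro a ha b hb
  by_contra hab
  wlog hlt : a < b generalizing a b
  · exact this hb ha (Ne.symm hab) (by omega)
  obtain ⟨ha1, hat, hae⟩ := ha
  obtain ⟨hb1, hbt, hbe⟩ := hb
  -- per-step facts
  have step : ∀ k, 1 ≤ k → k < t →
      ((H (k+1)).verts \ (H k).verts).ncard + 2 ≤ n + 2 ∧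
      ((H (k+1)).verts \ (H k).verts).ncard + 1 ≤
        ((H (k+1)).edgeSet \ (H k).edgeSet).ncard ∧
      (H (k+1)).verts.ncard = (H k).verts.ncard + ((H (k+1)).verts \ (H k).verts).ncard ∧
      (H (k+1)).edgeSet.ncard
        = (H k).edgeSet.ncard + ((H (k+1)).edgeSet \ (H k).edgeSet).ncard := by
    intro k hk1 hkt
    obtain ⟨C, hC, hns, hsh, hsup⟩ := hstep k hk1 hkt
    have hHk_le : H k ≤ H (k+1) := by rw [hsup]; exact le_sup_left
    have hv_eq : (H (k+1)).verts \ (H k).verts = C.verts \ (H k).verts := by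
      rw [hsup, SimpleGraph.Subgraph.verts_sup]
      ext x; simp only [Set.mem_diff, Set.mem_union]; tauto
    have he_eq : (H (k+1)).edgeSet \ (H k).edgeSet = C.edgeSet \ (H k).edgeSet := by
      rw [hsup, SimpleGraph.Subgraph.edgeSet_sup]
      ext x; simp only [Set.mem_diff, Set.mem_union]; tauto
    obtain ⟨hA, hB⟩ := step_bounds hn hC hns hsh
    refine ⟨by rw [hv_eq]; exact hA, by rw [hv_eq, he_eq]; exact hB, ?_, ?_⟩
    · have hsubv : (H k).verts ⊆ (H (k+1)).verts := SimpleGraph.Subgraph.verts_mono hHk_le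
      have h1 := Set.ncard_diff hsubv (Set.toFinite _)
      have h2 := Set.ncard_le_ncard hsubv (Set.toFinite _)
      omega
    · have hsube : (H k).edgeSet ⊆ (H (k+1)).edgeSet :=
        SimpleGraph.Subgraph.edgeSet_mono hHk_le
      have h1 := Set.ncard_diff hsube (Set.toFinite _)
      have h2 := Set.ncard_le_ncard hsube (Set.toFinite _)
      omega
  obtain ⟨hv1, he1⟩ := cycle_cards hn hcyc1
  -- main induction
  have main : ∀ m, m + 1 ≤ t →
      (H (m+1)).verts.ncard ≤ (n+2) + m * n ∧
      n + 2 ≤ (H (m+1)).verts.ncard ∧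
      (H (m+1)).verts.ncard + m + (if a ≤ m then 1 else 0) + (if b ≤ m then 1 else 0)
        ≤ (H (m+1)).edgeSet.ncard := by
    intro m
    induction m with
    | zero =>
      intro _
      rw [show (0:ℕ)+1 = 1 from rfl, hv1, he1, if_neg (by omega : ¬ a ≤ 0),
        if_neg (by omega : ¬ b ≤ 0)]
      omega
    | succ m ih =>
      intro hm1t
      obtain ⟨i1, i2, i3⟩ := ih (by omega)
      obtain ⟨s1, s2, s3, s4⟩ := step (m+1) (by omega) (by omega)
      obtain ⟨q, hq⟩ : ∃ q, m * n = q := ⟨_, rfl⟩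
      have hmn : (m+1) * n = q + n := by rw [← hq]; ring
      rw [hq] at i1
      have key : (if a ≤ m+1 then 1 else 0) + (if b ≤ m+1 then 1 else 0)
          + ((H (m+1+1)).verts \ (H (m+1)).verts).ncard + 1
          ≤ ((H (m+1+1)).edgeSet \ (H (m+1)).edgeSet).ncard
            + (if a ≤ m then 1 else 0) + (if b ≤ m then 1 else 0) := by
      -- case analysis on whether this step is a or b
        by_cases haa : a = m+1
        · have hv2 := haa ▸ hae
          rw [if_pos (by omega), if_neg (by omega : ¬ b ≤ m+1), if_neg (by omega : ¬ a ≤ m),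
            if_neg (by omega : ¬ b ≤ m)]
          omega
        · by_cases hbb : b = m+1
          · have hv2 := hbb ▸ hbe
            rw [if_succ_eq haa, if_pos (by omega : b ≤ m+1), if_neg (by omega : ¬ b ≤ m)]
            omega
          · rw [if_succ_eq haa, if_succ_eq hbb]
            omega
      refine ⟨?_, by omega, ?_⟩
      · rw [hmn]; omega
      · omega
  obtain ⟨u1, u2, u3⟩ := main b (by omega)
  rw [if_pos (le_of_lt hlt), if_pos le_rfl] at u3
  have hne : (H (b+1)).verts.Nonempty := Set.nonempty_of_ncard_ne_zero (by omega)
  have hg := hG (H (b+1)) hne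
  rw [show n+2-2 = n by omega, show n+2-1 = n+1 by omega] at hg
  obtain ⟨vv, hvv⟩ : ∃ v, (H (b+1)).verts.ncard = v := ⟨_, rfl⟩
  obtain ⟨ee, hee⟩ : ∃ e, (H (b+1)).edgeSet.ncard = e := ⟨_, rfl⟩
  rw [hvv] at hg u1 u2 u3
  rw [hee] at hg u3
  have h1 : n * (vv + b + 2) ≤ n * ee := Nat.mul_le_mul_left n (by omega)
  have h2 : (n+1) * vv = n * vv + vv := by ring
  have h3 : n * (vv + b + 2) = n*vv + n*b + 2*n := by ring
  have h5 : n*b + 2*n < vv := by linarith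
  have h6 : n*b + 2*n < n + 2 + b*n := lt_of_lt_of_le h5 u1
  have h7 : b*n = n*b := mul_comm b n
  rw [h7] at h6
  have h8 : 2*n < n + 2 := by linarith
  omega
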